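/- Let L be a number field of degree n such that for every prime p dividing n one has p^n does not divide Disc(L). Then tr_{L/ℚ}(O_L) = ℤ. -/

import Mathlib

open NumberField

/-- If every entry of a matrix is divisible by `c`, then `c ^ card` divides the determinant. -/
lemma dvd_det_of_dvd_entries {ι : Type*} [Fintype ι] [DecidableEq ι]
    (M : Matrix ι ι ℤ) (c : ℤ) (h : ∀ i j, c ∣ M i j) :
    c ^ Fintype.card ι ∣ M.det := by
  have : M = c • Matrix.of fun i j => M i j / c := by
    ext i j
    exact (Int.mul_ediv_cancel' (h i j)).symm
  rw [this, Matrix.det_smul]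
  exact Dvd.intro _ rfl

/-- If for every prime `p ∣ n` one has `p^n ∤ Disc(L)`, then `tr_{L/ℚ}(O_L) = ℤ`. -/
theorem stmt_5 (L : Type*) [Field L] [NumberField L]
    (n : ℕ) (hdeg : Module.finrank ℚ L = n)
    (h : ∀ p : ℕ, p.Prime → p ∣ n → ¬ ((p : ℤ) ^ n ∣ NumberField.discr L)) :
    LinearMap.range (Algebra.trace ℤ (𝓞 L)) = ⊤ := by
  classical
  by_contra hne
  set I : Ideal ℤ := LinearMap.range (Algebra.trace ℤ (𝓞 L)) with hI
  have hrank : Module.finrank ℤ (𝓞 L) = n := (RingOfIntegers.rank L).trans hdeg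
  -- n is in the range, as trace of 1
  have hn : (n : ℤ) ∈ I := by
    refine ⟨1, ?_⟩
    have : (1 : 𝓞 L) = algebraMap ℤ (𝓞 L) 1 := by simp
    rw [this, Algebra.trace_algebraMap, hrank]
    simp
  -- I is principal, generated by some d
  obtain ⟨d, hd⟩ : I.IsPrincipal := inferInstance
  rw [Ideal.submodule_span_eq] at hd
  have hdnotunit : ¬ IsUnit d := by
    intro hu
    exact hne (hd.trans (Ideal.span_singleton_eq_top.2 hu))
  have hdne : d ≠ 0 := by
    rintro rfl
    rw [hd, Ideal.span_singleton_eq_bot.2 rfl] at hn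
    have hn0 : n ≠ 0 := by
      have := Module.finrank_pos (R := ℚ) (M := L)
      omega
    simp at hn
    exact_mod_cast hn0 (by exact_mod_cast hn)
  have hdna : d.natAbs ≠ 1 := fun h1 => hdnotunit (Int.isUnit_iff_natAbs_eq.mpr h1)
  obtain ⟨p, hp, hpd⟩ := Int.exists_prime_and_dvd hdna
  -- p divides every trace
  have hptr : ∀ x : 𝓞 L, p ∣ Algebra.trace ℤ (𝓞 L) x := fun x => by
    have hx : Algebra.trace ℤ (𝓞 L) x ∈ I := ⟨x, rfl⟩
    rw [hd, Ideal.mem_span_singleton] at hx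
    exact hpd.trans hx
  -- hence p divides n
  have hpn : p ∣ (n : ℤ) := by
    have := hn; rw [hd, Ideal.mem_span_singleton] at this
    exact hpd.trans this
  -- and p^n divides the discriminant
  set b := RingOfIntegers.basis L
  have hcard : Fintype.card (Module.Free.ChooseBasisIndex ℤ (𝓞 L)) = n := by
    rw [← hrank, Module.finrank_eq_card_chooseBasisIndex]
  have hdisc : p ^ n ∣ NumberField.discr L := by
    rw [show NumberField.discr L = (Algebra.traceMatrix ℤ (b : _ → 𝓞 L)).det from rfl, ← hcard]
    exact dvd_det_of_dvd_entries _ p fun i j => hptr _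
  -- contradiction with h, using p.natAbs
  have hpnat : p.natAbs.Prime := Int.prime_iff_natAbs_prime.mp hp
  refine h p.natAbs hpnat ?_ ?_
  · exact Int.ofNat_dvd.mp (by simpa using (Int.natAbs_dvd.2 hpn))
  · have : (p.natAbs : ℤ) ^ n ∣ p ^ n := pow_dvd_pow_of_dvd (Int.natAbs_dvd.2 dvd_rfl) n
    exact this.trans hdisc
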